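/- Let {n_1,…,n_k} and {m_1,…,m_k} be sequences of positive integers such that n_i divides n_{i+1} and m_i divides m_{i+1} for all 1 ≤ i ≤ k−1. If for every positive integer l one has ∏_{i=1}^{k} l/gcd(l,n_i) = ∏_{i=1}^{k} l/gcd(l,m_i), then n_i = m_i for every 1 ≤ i ≤ k. -/

import Mathlib

open Finset

/-- In a divisibility chain, earlier terms divide later ones. -/
private lemma chain_dvd (k : ℕ) (a : ℕ → ℕ)
    (hda : ∀ i, 1 ≤ i → i + 1 ≤ k → a i ∣ a (i + 1)) :
    ∀ i j, 1 ≤ i → i ≤ j → j ≤ k → a i ∣ a j := by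
  intro i j hi hij hjk
  induction j with
  | zero => omega
  | succ n ih =>
    rcases Nat.lt_or_ge i (n+1) with hlt | hge
    · exact (ih (by omega) (by omega)).trans (hda n (by omega) hjk)
    · have : i = n + 1 := by omega
      subst this; rfl

/-- If a product over `s` of divisors of `M` equals `M ^ s.card`, each factor is `M`. -/
private lemma factor_eq (s : Finset ℕ) (f : ℕ → ℕ) (M : ℕ) (hM : 0 < M)
    (hdvd : ∀ i ∈ s, f i ∣ M) (hprod : ∏ i ∈ s, f i = M ^ s.card)
    {i0 : ℕ} (hi0 : i0 ∈ s) : f i0 = M := by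
  have hle : f i0 ≤ M := Nat.le_of_dvd hM (hdvd i0 hi0)
  refine le_antisymm hle ?_
  have hsplit : f i0 * ∏ i ∈ s.erase i0, f i = M ^ s.card :=
    (Finset.mul_prod_erase s f hi0).symm ▸ hprod
  have hcard : s.card = (s.erase i0).card + 1 := by
    rw [Finset.card_erase_of_mem hi0]
    have := Finset.card_pos.mpr ⟨i0, hi0⟩
    omega
  have hbound : ∏ i ∈ s.erase i0, f i ≤ M ^ (s.erase i0).card := by
    calc ∏ i ∈ s.erase i0, f i ≤ ∏ i ∈ s.erase i0, M :=
          Finset.prod_le_prod (fun _ _ => Nat.zero_le _)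
            (fun i hi => Nat.le_of_dvd hM (hdvd i (Finset.mem_of_mem_erase hi)))
      _ = M ^ (s.erase i0).card := Finset.prod_const M
  have : M * M ^ (s.erase i0).card ≤ f i0 * M ^ (s.erase i0).card := by
    calc M * M ^ (s.erase i0).card = M ^ s.card := by rw [hcard]; ring
      _ = f i0 * ∏ i ∈ s.erase i0, f i := hsplit.symm
      _ ≤ f i0 * M ^ (s.erase i0).card := Nat.mul_le_mul_left _ hbound
  exact Nat.le_of_mul_le_mul_right this (Nat.pow_pos hM)

/-- Key one-sided step. -/
private lemma key (k : ℕ) (a b : ℕ → ℕ)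
    (ha : ∀ i, 1 ≤ i → i ≤ k → 0 < a i)
    (hb : ∀ i, 1 ≤ i → i ≤ k → 0 < b i)
    (hda : ∀ i, 1 ≤ i → i + 1 ≤ k → a i ∣ a (i + 1))
    (hg : ∀ l : ℕ, 0 < l →
      ∏ i ∈ Finset.Icc 1 k, Nat.gcd l (a i) =
      ∏ i ∈ Finset.Icc 1 k, Nat.gcd l (b i))
    (j : ℕ) (hj1 : 1 ≤ j) (hjk : j ≤ k)
    (hprev : ∀ i, 1 ≤ i → i < j → a i = b i) :
    a j ∣ b j := by
  have haj : 0 < a j := ha j hj1 hjk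
  have hdchain := chain_dvd k a hda
  have hsplit : ∀ f : ℕ → ℕ,
      ∏ i ∈ Finset.Icc 1 k, f i =
      (∏ i ∈ Finset.Ioc 0 (j-1), f i) * ∏ i ∈ Finset.Ioc (j-1) k, f i := by
    intro f
    rw [show (1:ℕ) = 0 + 1 from rfl, Finset.Icc_add_one_left_eq_Ioc,
      Finset.prod_Ioc_consecutive f (Nat.zero_le _) (by omega)]
  have heq := hg (a j) haj
  rw [hsplit (fun i => Nat.gcd (a j) (a i)), hsplit (fun i => Nat.gcd (a j) (b i))] at heq
  have h1a : ∏ i ∈ Finset.Ioc 0 (j-1), Nat.gcd (a j) (a i) = ∏ i ∈ Finset.Ioc 0 (j-1), a i := by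
    refine Finset.prod_congr rfl fun i hi => ?_
    simp only [Finset.mem_Ioc] at hi
    exact Nat.gcd_eq_right (hdchain i j (by omega) (by omega) hjk)
  have h1b : ∏ i ∈ Finset.Ioc 0 (j-1), Nat.gcd (a j) (b i) = ∏ i ∈ Finset.Ioc 0 (j-1), a i := by
    refine Finset.prod_congr rfl fun i hi => ?_
    simp only [Finset.mem_Ioc] at hi
    rw [← hprev i (by omega) (by omega)]
    exact Nat.gcd_eq_right (hdchain i j (by omega) (by omega) hjk)
  have h2a : ∏ i ∈ Finset.Ioc (j-1) k, Nat.gcd (a j) (a i) =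
      a j ^ (Finset.Ioc (j-1) k).card := by
    rw [← Finset.prod_const]
    refine Finset.prod_congr rfl fun i hi => ?_
    simp only [Finset.mem_Ioc] at hi
    exact Nat.gcd_eq_left (hdchain j i hj1 (by omega) hi.2)
  rw [h1a, h1b, h2a] at heq
  have hPpos : 0 < ∏ i ∈ Finset.Ioc 0 (j-1), a i :=
    Finset.prod_pos fun i hi => by
      simp only [Finset.mem_Ioc] at hi; exact ha i (by omega) (by omega)
  have hmain : ∏ i ∈ Finset.Ioc (j-1) k, Nat.gcd (a j) (b i) =
      a j ^ (Finset.Ioc (j-1) k).card :=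
    (Nat.eq_of_mul_eq_mul_left hPpos heq).symm
  have hjmem : j ∈ Finset.Ioc (j-1) k := by simp only [Finset.mem_Ioc]; omega
  have := factor_eq (Finset.Ioc (j-1) k) (fun i => Nat.gcd (a j) (b i)) (a j) haj
    (fun i _ => Nat.gcd_dvd_left _ _) hmain hjmem
  exact this ▸ Nat.gcd_dvd_right (a j) (b j)

theorem stmt5 (k : ℕ) (a b : ℕ → ℕ)
    (ha : ∀ i, 1 ≤ i → i ≤ k → 0 < a i)
    (hb : ∀ i, 1 ≤ i → i ≤ k → 0 < b i)
    (hda : ∀ i, 1 ≤ i → i + 1 ≤ k → a i ∣ a (i + 1))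
    (hdb : ∀ i, 1 ≤ i → i + 1 ≤ k → b i ∣ b (i + 1))
    (h : ∀ l : ℕ, 0 < l →
      ∏ i ∈ Finset.Icc 1 k, l / Nat.gcd l (a i) =
      ∏ i ∈ Finset.Icc 1 k, l / Nat.gcd l (b i)) :
    ∀ i, 1 ≤ i → i ≤ k → a i = b i := by
  -- first convert h to gcd-product equality
  have hg : ∀ l : ℕ, 0 < l →
      ∏ i ∈ Finset.Icc 1 k, Nat.gcd l (a i) =
      ∏ i ∈ Finset.Icc 1 k, Nat.gcd l (b i) := by
    intro l hl
    have hA : (∏ i ∈ Finset.Icc 1 k, l / Nat.gcd l (a i)) *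
        (∏ i ∈ Finset.Icc 1 k, Nat.gcd l (a i)) = l ^ k := by
      rw [← Finset.prod_mul_distrib]
      rw [show l ^ k = ∏ _i ∈ Finset.Icc 1 k, l by
        rw [Finset.prod_const, Nat.card_Icc, Nat.add_sub_cancel]]
      exact Finset.prod_congr rfl fun i _ => Nat.div_mul_cancel (Nat.gcd_dvd_left l (a i))
    have hB : (∏ i ∈ Finset.Icc 1 k, l / Nat.gcd l (b i)) *
        (∏ i ∈ Finset.Icc 1 k, Nat.gcd l (b i)) = l ^ k := by
      rw [← Finset.prod_mul_distrib]
      rw [show l ^ k = ∏ _i ∈ Finset.Icc 1 k, l by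
        rw [Finset.prod_const, Nat.card_Icc, Nat.add_sub_cancel]]
      exact Finset.prod_congr rfl fun i _ => Nat.div_mul_cancel (Nat.gcd_dvd_left l (b i))
    have hQpos : 0 < ∏ i ∈ Finset.Icc 1 k, l / Nat.gcd l (a i) :=
      Finset.prod_pos fun i _ =>
        Nat.div_pos (Nat.le_of_dvd hl (Nat.gcd_dvd_left l (a i))) (Nat.gcd_pos_of_pos_left _ hl)
    rw [h l hl] at hA
    exact Nat.eq_of_mul_eq_mul_left (h l hl ▸ hQpos) (hA.trans hB.symm)
  intro i
  induction i using Nat.strong_induction_on with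
  | _ i ih =>
    intro hi1 hik
    have hab : a i ∣ b i := key k a b ha hb hda hg i hi1 hik
      (fun i' h1 h2 => ih i' h2 h1 (by omega))
    have hba : b i ∣ a i := key k b a hb ha hdb
      (fun l hl => (hg l hl).symm) i hi1 hik
      (fun i' h1 h2 => (ih i' h2 h1 (by omega)).symm)
    exact Nat.dvd_antisymm hab hba
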